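/- For every n ≥ 1, the polynomial A_n(x,1) = Σ_{σ ∈ S_{n+1}} ∏_{i ∈ DT(σ)} x_i, obtained from the multivariate Eulerian polynomial by setting all ascent-top variables equal to 1, is a real zero polynomial in the variables x_2,...,x_{n+1}. -/

import Mathlib

/-- Descent top set of a permutation `σ` of `Fin (n+1)`:
`DT(σ) = {σ(i) : i ∈ {1,...,n}, σ(i) > σ(i+1)}`. -/
def descentTops (n : ℕ) (σ : Equiv.Perm (Fin (n + 1))) : Finset (Fin (n + 1)) :=
  (Finset.univ.filter fun i : Fin n => σ i.succ < σ i.castSucc).image fun i => σ i.castSucc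

/-- The polynomial `A_n(x,1) = Σ_{σ ∈ S_{n+1}} ∏_{i ∈ DT(σ)} x_i`, obtained from the
multivariate Eulerian polynomial by setting all ascent-top variables equal to `1`. -/
noncomputable def mvEulerianDesc (n : ℕ) : MvPolynomial (Fin (n + 1)) ℝ :=
  ∑ σ : Equiv.Perm (Fin (n + 1)), ∏ i ∈ descentTops n σ, MvPolynomial.X i

namespace Stmt15Aux

open Equiv Finset Polynomial


/-- The "good" predicate for the half-plane induction: `P` is nonzero and all of its
roots `w` satisfy `Im (z*(w-1)) ≤ 0` and `w ≠ 1`. -/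
def Good (z : ℂ) (P : Polynomial ℂ) : Prop :=
  P ≠ 0 ∧ ∀ w : ℂ, P.eval w = 0 → (z * (w - 1)).im ≤ 0 ∧ w ≠ 1

/-- log-derivative formula: evaluation of the derivative of a fully split polynomial. -/
lemma logderiv (c : ℂ) (R : Multiset ℂ) (w : ℂ) (h : ∀ r ∈ R, w ≠ r) :
    (derivative (C c * (R.map (fun r => X - C r)).prod)).eval w =
      (C c * (R.map (fun r => X - C r)).prod).eval w * (R.map (fun r => (w - r)⁻¹)).sum := by
  induction R using Multiset.induction_on with
  | empty => simp
  | cons r R ih =>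
    have hwr : w - r ≠ 0 := sub_ne_zero.mpr (h r (Multiset.mem_cons_self r R))
    have ih' := ih (fun r' hr' => h r' (Multiset.mem_cons_of_mem hr'))
    have hre : C c * (Multiset.map (fun r => X - C r) (r ::ₘ R)).prod
        = (X - C r) * (C c * (Multiset.map (fun r => X - C r) R).prod) := by
      rw [Multiset.map_cons, Multiset.prod_cons]; ring
    rw [hre, derivative_mul, Multiset.map_cons, Multiset.sum_cons]
    simp only [eval_mul, eval_add, eval_sub, eval_X, eval_C, derivative_sub, derivative_X,
      derivative_C, sub_zero, eval_one, ih']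
    field_simp

lemma im_conj_mul_inv (z s : ℂ) (hs : s ≠ 0) :
    ((starRingEnd ℂ) z * s⁻¹).im = -(z * s).im / Complex.normSq s := by
  rw [Complex.inv_def]
  have h2 : (starRingEnd ℂ) z * ((starRingEnd ℂ) s * (((Complex.normSq s)⁻¹ : ℝ) : ℂ))
      = (starRingEnd ℂ) (z * s) * (((Complex.normSq s)⁻¹ : ℝ) : ℂ) := by
    rw [map_mul]; ring
  rw [h2]
  have hns : Complex.normSq s ≠ 0 := fun h => hs (Complex.normSq_eq_zero.mp h)
  simp [Complex.mul_im, Complex.conj_im, div_eq_mul_inv]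
  field_simp
  ring

lemma im_conj_mul_sum_nonpos (z : ℂ) (S : Multiset ℂ)
    (h : ∀ t ∈ S, ((starRingEnd ℂ) z * t).im ≤ 0) :
    ((starRingEnd ℂ) z * S.sum).im ≤ 0 := by
  induction S using Multiset.induction_on with
  | empty => simp
  | cons t S ih =>
    rw [Multiset.sum_cons, mul_add, Complex.add_im]
    have h1 := h t (Multiset.mem_cons_self t S)
    have h2 := ih (fun t' ht' => h t' (Multiset.mem_cons_of_mem ht'))
    linarith

/-- The main analytic step: the operator `P ↦ (X·((1-zα) + zα·X)·P)'` preserves `Good z`. -/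
lemma glstep (z : ℂ) (hz : 0 < z.im) (α : ℝ) (P : Polynomial ℂ) (hP : Good z P) :
    Good z (derivative (X * (C (1 - z * α) + C (z * α) * X) * P)) := by
  obtain ⟨hP0, hProots⟩ := hP
  set L : Polynomial ℂ := C (1 - z * α) + C (z * α) * X with hLdef
  have hLeval : ∀ w : ℂ, L.eval w = 1 + z * α * (w - 1) := by
    intro w; simp [hLdef]; ring
  have hL0 : L ≠ 0 := by
    intro h
    have : L.eval 1 = 0 := by rw [h]; simp
    rw [hLeval 1] at this; simp at this
  set Q : Polynomial ℂ := X * L * P with hQdef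
  have hQ0 : Q ≠ 0 := mul_ne_zero (mul_ne_zero X_ne_zero hL0) hP0
  -- all roots of Q are good
  have hQroots : ∀ w : ℂ, Q.eval w = 0 → (z * (w - 1)).im ≤ 0 ∧ w ≠ 1 := by
    intro w hw
    rw [hQdef] at hw
    simp only [eval_mul, eval_X] at hw
    rcases mul_eq_zero.mp hw with hw' | hw'
    · rcases mul_eq_zero.mp hw' with hw'' | hw''
      · subst hw''
        constructor
        · simp [Complex.mul_im]; linarith
        · exact fun h => one_ne_zero h.symm
      · rw [hLeval w] at hw''
        have hzα : z * α ≠ 0 := by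
          intro h; rw [h] at hw''; simp at hw''
        have hα : (α : ℂ) ≠ 0 := fun h => hzα (by rw [h, mul_zero])
        have h1 : z * α * (w - 1) = -1 := by linear_combination hw''
        have hzw : z * (w - 1) = -((α : ℂ))⁻¹ := by
          apply mul_left_cancel₀ hα
          rw [mul_neg, mul_inv_cancel₀ hα]
          linear_combination h1
        constructor
        · rw [hzw, ← Complex.ofReal_inv, ← Complex.ofReal_neg]
          simp
        · intro h; subst h
          rw [sub_self, mul_zero] at h1
          simp at h1
    · exact hProots w hw'
  -- Q has 0 as a root
  have h0Q : (0 : ℂ) ∈ Q.roots := by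
    rw [mem_roots hQ0]
    show Q.eval 0 = 0
    simp [hQdef]
  -- derivative is nonzero
  have hD0 : derivative Q ≠ 0 := by
    intro h
    have hdeg := natDegree_eq_zero_of_derivative_eq_zero h
    have : Q.natDegree = 1 + (L * P).natDegree := by
      rw [hQdef, mul_assoc, natDegree_mul X_ne_zero (mul_ne_zero hL0 hP0), natDegree_X]
    omega
  refine ⟨hD0, ?_⟩
  intro w hw
  by_contra hbad
  -- hbad : ¬(im ≤ 0 ∧ w ≠ 1)
  have hB : 0 < (z * (w - 1)).im ∨ w = 1 := by
    by_cases h1 : w = 1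
    · exact Or.inr h1
    · left
      by_contra h2
      push_neg at h2
      exact hbad ⟨h2, h1⟩
  -- setup split form
  have hcard : Multiset.card Q.roots = Q.natDegree :=
    (splits_iff_card_roots).mp (IsAlgClosed.splits Q)
  have hsplit := C_leadingCoeff_mul_prod_multiset_X_sub_C hcard
  -- root properties
  have hgood : ∀ r ∈ Q.roots, (z * (r - 1)).im ≤ 0 ∧ r ≠ 1 := by
    intro r hr
    exact hQroots r ((mem_roots hQ0).mp hr)
  have hkey : ∀ r ∈ Q.roots, w ≠ r ∧ 0 ≤ (z * (w - r)).im ∧ (r = 0 → 0 < (z * (w - r)).im) := by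
    intro r hr
    obtain ⟨hr1, hr2⟩ := hgood r hr
    rcases hB with hB | hB
    · have him : 0 < (z * (w - r)).im := by
        have : z * (w - r) = z * (w - 1) - z * (r - 1) := by ring
        rw [this, Complex.sub_im]; linarith
      refine ⟨?_, le_of_lt him, fun _ => him⟩
      intro h; subst h; simp at him
    · subst hB
      have him : 0 ≤ (z * (1 - r)).im := by
        have : z * (1 - r) = -(z * (r - 1)) := by ring
        rw [this, Complex.neg_im]; linarith
      refine ⟨fun h => hr2 h.symm, him, ?_⟩
      intro h; subst h
      simpa using hz
  -- the sum of reciprocals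
  set T : ℂ := (Q.roots.map (fun r => (w - r)⁻¹)).sum with hTdef
  have hterm : ∀ r ∈ Q.roots, ((starRingEnd ℂ) z * (w - r)⁻¹).im ≤ 0 := by
    intro r hr
    obtain ⟨h1, h2, _⟩ := hkey r hr
    rw [im_conj_mul_inv z _ (sub_ne_zero.mpr h1)]
    apply div_nonpos_of_nonpos_of_nonneg
    · linarith
    · exact Complex.normSq_nonneg _
  have hTneg : ((starRingEnd ℂ) z * T).im < 0 := by
    have hsplit0 : Q.roots = 0 ::ₘ Q.roots.erase 0 := (Multiset.cons_erase h0Q).symm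
    rw [hTdef, hsplit0, Multiset.map_cons, Multiset.sum_cons, mul_add, Complex.add_im]
    have hstrict : ((starRingEnd ℂ) z * (w - 0)⁻¹).im < 0 := by
      obtain ⟨h1, _, h3⟩ := hkey 0 h0Q
      rw [im_conj_mul_inv z _ (sub_ne_zero.mpr h1)]
      apply div_neg_of_neg_of_pos
      · linarith [h3 rfl]
      · exact Complex.normSq_pos.mpr (sub_ne_zero.mpr h1)
    have hrest : ((starRingEnd ℂ) z * (Multiset.map (fun r => (w - r)⁻¹) (Q.roots.erase 0)).sum).im ≤ 0 := by
      apply im_conj_mul_sum_nonpos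
      intro t ht
      obtain ⟨r, hr, rfl⟩ := Multiset.mem_map.mp ht
      exact hterm r (Multiset.mem_of_mem_erase hr)
    linarith
  have hT0 : T ≠ 0 := by
    intro h; rw [h, mul_zero] at hTneg; simp at hTneg
  -- Q.eval w ≠ 0
  have hQw : Q.eval w ≠ 0 := by
    intro h
    have hwin : w ∈ Q.roots := (mem_roots hQ0).mpr h
    exact (hkey w hwin).1 rfl
  -- conclude
  have := logderiv Q.leadingCoeff Q.roots w (fun r hr => (hkey r hr).1)
  rw [hsplit] at this
  rw [this] at hw
  exact (mul_ne_zero hQw hT0) hw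



open Equiv Finset

variable {m : ℕ}

/-- Insertion of the value `0` at position `j` into the word of `τ` (values shifted up). -/
def ins (j : Fin (m + 2)) (τ : Equiv.Perm (Fin (m + 1))) : Equiv.Perm (Fin (m + 2)) :=
  ((finSuccEquiv (m + 1)).symm.permCongr τ.optionCongr) * j.cycleRange

lemma ins_apply (j : Fin (m + 2)) (τ : Equiv.Perm (Fin (m + 1))) (x : Fin (m + 2)) :
    ins j τ x = (finSuccEquiv (m + 1)).symm (Option.map τ (finSuccEquiv (m + 1) (j.cycleRange x))) := by
  simp [ins, Equiv.Perm.mul_apply, Equiv.permCongr_apply, Equiv.optionCongr_apply]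

@[simp] lemma ins_apply_self (j : Fin (m + 2)) (τ : Equiv.Perm (Fin (m + 1))) :
    ins j τ j = 0 := by
  rw [ins_apply, Fin.cycleRange_self, finSuccEquiv_zero]
  simp

lemma ins_apply_succAbove (j : Fin (m + 2)) (τ : Equiv.Perm (Fin (m + 1))) (i : Fin (m + 1)) :
    ins j τ (j.succAbove i) = (τ i).succ := by
  rw [ins_apply, Fin.cycleRange_succAbove, finSuccEquiv_succ]
  simp

lemma ins_castSucc (j : Fin (m + 2)) (τ : Equiv.Perm (Fin (m + 1))) (i : Fin (m + 1))
    (h : i.castSucc < j) : ins j τ i.castSucc = (τ i).succ := by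
  rw [← Fin.succAbove_of_castSucc_lt j i h, ins_apply_succAbove]

lemma ins_succ (j : Fin (m + 2)) (τ : Equiv.Perm (Fin (m + 1))) (i : Fin (m + 1))
    (h : j ≤ i.castSucc) : ins j τ i.succ = (τ i).succ := by
  rw [← Fin.succAbove_of_le_castSucc j i h, ins_apply_succAbove]

lemma ins_injective :
    Function.Injective (fun p : Fin (m + 2) × Equiv.Perm (Fin (m + 1)) => ins p.1 p.2) := by
  rintro ⟨j, τ⟩ ⟨j', τ'⟩ h
  simp only at h
  have hj : j = j' := by
    by_contra hne
    obtain ⟨i, hi⟩ := Fin.exists_succAbove_eq hne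
    have h0 : ins j' τ' j = 0 := by rw [← h]; exact ins_apply_self ..
    rw [← hi, ins_apply_succAbove] at h0
    exact Fin.succ_ne_zero _ h0
  subst hj
  have hτ : τ = τ' := by
    apply Equiv.ext; intro i
    have h2 := congrArg (fun σ : Equiv.Perm (Fin (m + 2)) => σ (j.succAbove i)) h
    simp only [ins_apply_succAbove] at h2
    exact Fin.succ_inj.mp h2
  rw [hτ]

lemma ins_bijective :
    Function.Bijective (fun p : Fin (m + 2) × Equiv.Perm (Fin (m + 1)) => ins p.1 p.2) := by
  rw [Fintype.bijective_iff_injective_and_card]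
  refine ⟨ins_injective, ?_⟩
  simp [Fintype.card_perm, Nat.factorial_succ]

lemma zero_not_mem_descentTops (k : ℕ) (σ : Equiv.Perm (Fin (k + 1))) :
    (0 : Fin (k + 1)) ∉ descentTops k σ := by
  intro h
  simp only [descentTops, Finset.mem_image, Finset.mem_filter, Finset.mem_univ, true_and] at h
  obtain ⟨i, hi, hzero⟩ := h
  rw [hzero] at hi
  exact Fin.not_lt_zero _ hi

lemma mem_descentTops_iff (k : ℕ) (σ : Equiv.Perm (Fin (k + 1))) (v : Fin (k + 1)) :
    v ∈ descentTops k σ ↔ ∃ i : Fin k, σ i.succ < σ i.castSucc ∧ σ i.castSucc = v := by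
  simp [descentTops, Finset.mem_image, Finset.mem_filter]

lemma descentTops_ins_zero (τ : Equiv.Perm (Fin (m + 1))) :
    descentTops (m + 1) (ins 0 τ) = (descentTops m τ).image Fin.succ := by
  ext v
  rw [mem_descentTops_iff]
  constructor
  · rintro ⟨i, hlt, rfl⟩
    by_cases h0 : i.val = 0
    · have hcs : i.castSucc = (0 : Fin (m + 2)) := by
        apply Fin.ext; simp [h0]
      rw [hcs, ins_apply_self] at hlt
      exact absurd hlt (Fin.not_lt_zero _)
    · have hA : i.val - 1 < m + 1 := by omega
      set A : Fin (m + 1) := ⟨i.val - 1, hA⟩ with hAdef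
      have hcastA : i.castSucc = A.succ := by apply Fin.ext; simp [hAdef]; omega
      have e1 : ins 0 τ i.castSucc = (τ A).succ := by
        rw [hcastA]; exact ins_succ _ _ A (Fin.zero_le _)
      have e2 : ins 0 τ i.succ = (τ i).succ := ins_succ _ _ i (Fin.zero_le _)
      rw [e1, e2] at hlt
      rw [e1]
      have hI'' : i.val - 1 < m := by have := i.isLt; omega
      refine Finset.mem_image.mpr ⟨τ A, ?_, rfl⟩
      rw [mem_descentTops_iff]
      refine ⟨⟨i.val - 1, hI''⟩, ?_, ?_⟩
      · have hc : (⟨i.val - 1, hI''⟩ : Fin m).castSucc = A := by apply Fin.ext; simp [hAdef]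
        have hs : (⟨i.val - 1, hI''⟩ : Fin m).succ = i := by apply Fin.ext; simp; omega
        rw [hc, hs]
        exact Fin.succ_lt_succ_iff.mp hlt
      · rfl
  · rintro hv
    obtain ⟨x, hx, rfl⟩ := Finset.mem_image.mp hv
    rw [mem_descentTops_iff] at hx
    obtain ⟨i'', hd, rfl⟩ := hx
    refine ⟨i''.succ, ?_, ?_⟩
    · have e1 : ins 0 τ i''.succ.castSucc = (τ i''.castSucc).succ := by
        rw [← Fin.succ_castSucc]
        exact ins_succ _ _ i''.castSucc (Fin.zero_le _)
      have e2 : ins 0 τ i''.succ.succ = (τ i''.succ).succ := ins_succ _ _ i''.succ (Fin.zero_le _)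
      rw [e1, e2]
      exact Fin.succ_lt_succ_iff.mpr hd
    · rw [← Fin.succ_castSucc]
      exact ins_succ _ _ i''.castSucc (Fin.zero_le _)

lemma descentTops_ins_succ (k : Fin (m + 1)) (τ : Equiv.Perm (Fin (m + 1))) :
    descentTops (m + 1) (ins k.succ τ) =
      insert (τ k).succ ((descentTops m τ).image Fin.succ) := by
  ext v
  rw [mem_descentTops_iff]
  constructor
  · rintro ⟨i, hlt, rfl⟩
    by_cases h1 : i.val = k.val
    · -- i = k : the inserted descent
      have hik : i = k := Fin.ext h1
      subst hik
      have hcs : ins i.succ τ i.castSucc = (τ i).succ :=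
        ins_castSucc _ _ i (Fin.castSucc_lt_succ (i := i))
      rw [hcs]
      exact Finset.mem_insert_self _ _
    · by_cases h2 : i.val < k.val
      · -- i.succ < j
        have hBlt : i.val + 1 < m + 1 := by have := k.isLt; omega
        set B : Fin (m + 1) := ⟨i.val + 1, hBlt⟩ with hBdef
        have hsuccB : i.succ = B.castSucc := by apply Fin.ext; simp [hBdef]
        have e1 : ins k.succ τ i.castSucc = (τ i).succ := by
          apply ins_castSucc; rw [Fin.lt_def]; simp; omega
        have e2 : ins k.succ τ i.succ = (τ B).succ := by
          rw [hsuccB]; apply ins_castSucc; rw [Fin.lt_def]; simp [hBdef]; omega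
        rw [e1, e2] at hlt
        rw [e1]
        apply Finset.mem_insert_of_mem
        refine Finset.mem_image.mpr ⟨τ i, ?_, rfl⟩
        rw [mem_descentTops_iff]
        have hI'' : i.val < m := by omega
        refine ⟨⟨i.val, hI''⟩, ?_, ?_⟩
        · have hc : (⟨i.val, hI''⟩ : Fin m).castSucc = i := by apply Fin.ext; simp
          have hs : (⟨i.val, hI''⟩ : Fin m).succ = B := by apply Fin.ext; simp [hBdef]
          rw [hc, hs]
          exact Fin.succ_lt_succ_iff.mp hlt
        · congr 1
      · -- k.val < i.val
        by_cases h3 : i.val = k.val + 1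
        · -- i.castSucc = j : value 0 on the left, impossible
          have hcs : i.castSucc = k.succ := by apply Fin.ext; simp [h3]
          rw [hcs, ins_apply_self] at hlt
          exact absurd hlt (Fin.not_lt_zero _)
        · have h4 : k.val + 1 < i.val := by omega
          have hA : i.val - 1 < m + 1 := by omega
          set A : Fin (m + 1) := ⟨i.val - 1, hA⟩ with hAdef
          have hcastA : i.castSucc = A.succ := by apply Fin.ext; simp [hAdef]; omega
          have e1 : ins k.succ τ i.castSucc = (τ A).succ := by
            rw [hcastA]; apply ins_succ; rw [Fin.le_def]; simp [hAdef]; omega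
          have e2 : ins k.succ τ i.succ = (τ i).succ := by
            apply ins_succ; rw [Fin.le_def]; simp; omega
          rw [e1, e2] at hlt
          rw [e1]
          apply Finset.mem_insert_of_mem
          refine Finset.mem_image.mpr ⟨τ A, ?_, rfl⟩
          rw [mem_descentTops_iff]
          have hI'' : i.val - 1 < m := by have := i.isLt; omega
          refine ⟨⟨i.val - 1, hI''⟩, ?_, ?_⟩
          · have hc : (⟨i.val - 1, hI''⟩ : Fin m).castSucc = A := by apply Fin.ext; simp [hAdef]
            have hs : (⟨i.val - 1, hI''⟩ : Fin m).succ = i := by apply Fin.ext; simp; omega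
            rw [hc, hs]
            exact Fin.succ_lt_succ_iff.mp hlt
          · congr 1
  · intro hv
    rcases Finset.mem_insert.mp hv with hv | hv
    · -- the inserted descent top
      subst hv
      refine ⟨k, ?_, ?_⟩
      · rw [ins_apply_self, ins_castSucc _ _ k (Fin.castSucc_lt_succ (i := k))]
        exact Fin.succ_pos _
      · exact ins_castSucc _ _ k (Fin.castSucc_lt_succ (i := k))
    · obtain ⟨x, hx, rfl⟩ := Finset.mem_image.mp hv
      rw [mem_descentTops_iff] at hx
      obtain ⟨i'', hd, rfl⟩ := hx
      by_cases ha : i''.val < k.val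
      · -- case (a) : both positions strictly left of j
        refine ⟨i''.castSucc, ?_, ?_⟩
        · have e1 : ins k.succ τ i''.castSucc.castSucc = (τ i''.castSucc).succ := by
            apply ins_castSucc; rw [Fin.lt_def]; simp; omega
          have e2 : ins k.succ τ i''.castSucc.succ = (τ i''.succ).succ := by
            rw [Fin.succ_castSucc]
            apply ins_castSucc; rw [Fin.lt_def]; simp; omega
          rw [e1, e2]
          exact Fin.succ_lt_succ_iff.mpr hd
        · apply ins_castSucc; rw [Fin.lt_def]; simp; omega
      · by_cases hb : i''.val = k.val
        · -- case (c) : the pair is split by the insertion; use the inserted descent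
          have hpk : i''.castSucc = k := Fin.ext (by simpa using hb)
          refine ⟨k, ?_, ?_⟩
          · rw [ins_apply_self, ins_castSucc _ _ k (Fin.castSucc_lt_succ (i := k))]
            exact Fin.succ_pos _
          · rw [ins_castSucc _ _ k (Fin.castSucc_lt_succ (i := k)), hpk]
        · -- case (b) : both positions right of j
          have hkb : k.val < i''.val := by omega
          refine ⟨i''.succ, ?_, ?_⟩
          · have e1 : ins k.succ τ i''.succ.castSucc = (τ i''.castSucc).succ := by
              rw [← Fin.succ_castSucc]
              apply ins_succ; rw [Fin.le_def]; simp; omega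
            have e2 : ins k.succ τ i''.succ.succ = (τ i''.succ).succ := by
              apply ins_succ; rw [Fin.le_def]; simp; omega
            rw [e1, e2]
            exact Fin.succ_lt_succ_iff.mpr hd
          · rw [← Fin.succ_castSucc]
            apply ins_succ; rw [Fin.le_def]; simp; omega



open Equiv Finset Polynomial

variable {m : ℕ}


noncomputable def fX (y : ℕ → ℂ) (v : ℕ) : Polynomial ℂ := C (y v) * X

noncomputable def gX (y : ℕ → ℂ) (v : ℕ) : Polynomial ℂ := C (1 - y v) + C (y v) * X

noncomputable def W (y : ℕ → ℂ) (k : ℕ) (σ : Equiv.Perm (Fin (k + 1))) : Polynomial ℂ :=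
  (∏ v ∈ descentTops k σ, fX y v.val) *
    ∏ v ∈ (univ : Finset (Fin (k + 1))) \ insert 0 (descentTops k σ), gX y v.val

noncomputable def Pc (k : ℕ) (y : ℕ → ℂ) : Polynomial ℂ :=
  ∑ σ : Equiv.Perm (Fin (k + 1)), W y k σ

lemma Pc_zero (y : ℕ → ℂ) : Pc 0 y = 1 := by
  have hW : ∀ σ : Equiv.Perm (Fin 1), W y 0 σ = 1 := by
    intro σ
    have hD : descentTops 0 σ = ∅ := by
      simp [descentTops]
    rw [W, hD]
    simp
  rw [Pc]
  simp only [hW]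
  rw [Finset.sum_const, card_univ, Fintype.card_perm]
  simp

lemma compl_image (S : Finset (Fin (m + 1))) :
    (univ : Finset (Fin (m + 2))) \ insert 0 (S.image Fin.succ) =
      (univ \ S).image Fin.succ := by
  ext w
  simp only [Finset.mem_sdiff, Finset.mem_insert, Finset.mem_image, Finset.mem_univ, true_and]
  constructor
  · intro hw
    push_neg at hw
    induction w using Fin.cases with
    | zero => exact absurd rfl hw.1
    | succ x => exact ⟨x, fun hx => hw.2 x hx rfl, rfl⟩
  · rintro ⟨x, hx, rfl⟩
    push_neg
    exact ⟨Fin.succ_ne_zero x, fun a ha h => hx (Fin.succ_inj.mp h ▸ ha)⟩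

/-- The "transfer" weight attached to a subset. -/
noncomputable def TT (y : ℕ → ℂ) (S : Finset (Fin (m + 1))) : Polynomial ℂ :=
  (∏ v ∈ S, fX y (v.val + 1)) * ∏ v ∈ (univ : Finset (Fin (m + 1))) \ S, gX y (v.val + 1)

lemma W_image (y : ℕ → ℂ) (S : Finset (Fin (m + 1))) :
    (∏ v ∈ S.image Fin.succ, fX y v.val) *
      (∏ v ∈ (univ : Finset (Fin (m + 2))) \ insert 0 (S.image Fin.succ), gX y v.val) =
      TT y S := by
  rw [compl_image, TT]
  rw [Finset.prod_image (by intro a _ b _ h; exact Fin.succ_inj.mp h),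
    Finset.prod_image (by intro a _ b _ h; exact Fin.succ_inj.mp h)]
  simp [Fin.val_succ]

lemma W_ins_zero (y : ℕ → ℂ) (τ : Equiv.Perm (Fin (m + 1))) :
    W y (m + 1) (ins 0 τ) = TT y (descentTops m τ) := by
  rw [W, descentTops_ins_zero, W_image]

lemma W_ins_succ (y : ℕ → ℂ) (τ : Equiv.Perm (Fin (m + 1))) (k : Fin (m + 1)) :
    W y (m + 1) (ins k.succ τ) = TT y (insert (τ k) (descentTops m τ)) := by
  rw [W, descentTops_ins_succ, ← Finset.image_insert, W_image]

lemma derivative_gX (y : ℕ → ℂ) (v : ℕ) : derivative (gX y v) = C (y v) := by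
  simp [gX]

/-- Core algebraic identity for the transfer operator (per-permutation). -/
lemma core_alg (y : ℕ → ℂ) (D : Finset (Fin (m + 1))) :
    derivative (X * (∏ v ∈ D, fX y (v.val + 1)) *
        ∏ v ∈ (univ : Finset (Fin (m + 1))) \ D, gX y (v.val + 1)) =
      TT y D + ((∑ u ∈ (univ : Finset (Fin (m + 1))) \ D, TT y (insert u D)) +
        D.card • TT y D) := by
  classical
  set E : Finset (Fin (m + 1)) := univ \ D with hE
  set c : ℂ := ∏ v ∈ D, y (v.val + 1) with hc
  set d : ℕ := D.card with hd
  have hP : ∏ v ∈ D, fX y (v.val + 1) = C c * X ^ d := by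
    unfold fX
    rw [Finset.prod_mul_distrib, Finset.prod_const, ← map_prod]
  have hcompl : ∀ u : Fin (m + 1), (univ : Finset (Fin (m + 1))) \ insert u D = E.erase u := by
    intro u
    rw [hE, Finset.sdiff_insert]
  have hTTins : ∀ u ∈ E, TT y (insert u D) =
      (C (y (u.val + 1)) * X) * (C c * X ^ d) * ∏ v ∈ E.erase u, gX y (v.val + 1) := by
    intro u hu
    have huD : u ∉ D := (Finset.mem_sdiff.mp hu).2
    rw [TT, Finset.prod_insert huD, hP, hcompl u,
      show fX y (u.val + 1) = C (y (u.val + 1)) * X from rfl]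
  have hTTD : TT y D = C c * X ^ d * ∏ v ∈ E, gX y (v.val + 1) := by rw [TT, hP]
  have hshape : X * (∏ v ∈ D, fX y (v.val + 1)) * ∏ v ∈ E, gX y (v.val + 1)
      = C c * (X ^ (d + 1) * ∏ v ∈ E, gX y (v.val + 1)) := by
    rw [hP]; ring
  have hder : derivative (∏ v ∈ E, gX y (v.val + 1)) =
      ∑ u ∈ E, (∏ v ∈ E.erase u, gX y (v.val + 1)) * C (y (u.val + 1)) := by
    have h1 : derivative (∏ v ∈ E, gX y (v.val + 1)) =
        ∑ u ∈ E, (∏ v ∈ E.erase u, gX y (v.val + 1)) * derivative (gX y (u.val + 1)) :=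
      derivative_prod
    rw [h1]
    exact Finset.sum_congr rfl fun u _ => by rw [derivative_gX]
  have hterm2 : C c * (X ^ (d + 1) * ∑ u ∈ E, (∏ v ∈ E.erase u, gX y (v.val + 1)) * C (y (u.val + 1)))
      = ∑ u ∈ E, TT y (insert u D) := by
    rw [Finset.mul_sum, Finset.mul_sum]
    apply Finset.sum_congr rfl
    intro u hu
    rw [hTTins u hu]
    ring
  have hterm1 : C c * (C ((d + 1 : ℕ) : ℂ) * X ^ d * ∏ v ∈ E, gX y (v.val + 1))
      = TT y D + d • TT y D := by
    rw [hTTD, nsmul_eq_mul]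
    push_cast [C_eq_natCast]
    simp only [map_add, map_one, C_eq_natCast]
    ring
  rw [hshape, derivative_C_mul, derivative_mul, derivative_pow, derivative_X, hder]
  simp only [Nat.add_sub_cancel, mul_one]
  rw [mul_add, hterm1, hterm2]
  abel

lemma sum_ins_eq (y : ℕ → ℂ) (τ : Equiv.Perm (Fin (m + 1))) :
    ∑ j : Fin (m + 2), W y (m + 1) (ins j τ) =
      derivative (X * gX y 1 * W (fun v => y (v + 1)) m τ) := by
  classical
  set D := descentTops m τ with hD
  have hD0 : (0 : Fin (m + 1)) ∉ D := zero_not_mem_descentTops m τ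
  rw [Fin.sum_univ_succ, W_ins_zero]
  rw [Finset.sum_congr rfl (fun k _ => W_ins_succ y τ k)]
  rw [Equiv.sum_comp τ (fun u => TT y (insert u D))]
  rw [← Finset.sum_sdiff (Finset.subset_univ D)]
  have h2 : ∑ u ∈ D, TT y (insert u D) = D.card • TT y D := by
    rw [Finset.sum_congr rfl (fun u hu => by rw [Finset.insert_eq_self.mpr hu]),
      Finset.sum_const]
  rw [h2]
  have hWs : W (fun v => y (v + 1)) m τ =
      (∏ v ∈ D, fX y (v.val + 1)) *
        ∏ v ∈ (univ : Finset (Fin (m + 1))) \ insert 0 D, gX y (v.val + 1) := rfl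
  rw [hWs]
  have h0E : (0 : Fin (m + 1)) ∈ (univ : Finset (Fin (m + 1))) \ D :=
    Finset.mem_sdiff.mpr ⟨Finset.mem_univ _, hD0⟩
  have h3 : X * gX y 1 *
      ((∏ v ∈ D, fX y (v.val + 1)) *
        ∏ v ∈ (univ : Finset (Fin (m + 1))) \ insert 0 D, gX y (v.val + 1)) =
      X * (∏ v ∈ D, fX y (v.val + 1)) *
        ∏ v ∈ (univ : Finset (Fin (m + 1))) \ D, gX y (v.val + 1) := by
    rw [← Finset.mul_prod_erase _ _ h0E,
      show ((univ : Finset (Fin (m + 1))) \ insert 0 D) = ((univ : Finset (Fin (m+1))) \ D).erase 0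
        from Finset.sdiff_insert _ _ _]
    show X * gX y 1 * _ = X * _ * (gX y ((0 : Fin (m+1)).val + 1) * _)
    norm_num
    ring
  rw [h3, core_alg]

lemma Pc_succ (y : ℕ → ℂ) :
    Pc (m + 1) y =
      derivative (X * (C (1 - y 1) + C (y 1) * X) * Pc m (fun v => y (v + 1))) := by
  have h1 : Pc (m + 1) y = ∑ p : Fin (m + 2) × Equiv.Perm (Fin (m + 1)), W y (m + 1) (ins p.1 p.2) :=
    (Fintype.sum_bijective _ ins_bijective _ _ (fun p => rfl)).symm
  rw [h1, Fintype.sum_prod_type, Finset.sum_comm]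
  rw [Finset.sum_congr rfl (fun τ _ => sum_ins_eq y τ)]
  rw [← derivative_sum, ← Finset.mul_sum]
  rfl

lemma eval_W_one (y : ℕ → ℂ) (k : ℕ) (σ : Equiv.Perm (Fin (k + 1))) :
    (W y k σ).eval 1 = ∏ v ∈ descentTops k σ, y v.val := by
  rw [W, eval_mul, eval_prod, eval_prod]
  have hg : ∀ v ∈ (univ : Finset (Fin (k+1))) \ insert 0 (descentTops k σ),
      (gX y v.val).eval 1 = 1 := by
    intro v _
    simp [gX]
  rw [Finset.prod_congr rfl hg, Finset.prod_const_one, mul_one]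
  apply Finset.prod_congr rfl
  intro v _
  simp [fX]

lemma eval_Pc_one (k : ℕ) (y : ℕ → ℂ) :
    (Pc k y).eval 1 = ∑ σ : Equiv.Perm (Fin (k + 1)), ∏ v ∈ descentTops k σ, y v.val := by
  rw [Pc, eval_finset_sum]
  exact Finset.sum_congr rfl fun σ _ => eval_W_one y k σ


lemma good_Pc (z : ℂ) (hz : 0 < z.im) (k : ℕ) :
    ∀ a : ℕ → ℝ, Good z (Pc k (fun v => z * (a v : ℂ))) := by
  induction k with
  | zero =>
    intro a
    rw [Pc_zero]
    exact ⟨one_ne_zero, fun w hw => by simp at hw⟩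
  | succ k ih =>
    intro a
    rw [Pc_succ]
    exact glstep z hz (a 1) _ (ih (fun v => a (v + 1)))

end Stmt15Aux

open Stmt15Aux in
/-- For every `n ≥ 1`, the polynomial `A_n(x,1)` is a real zero polynomial: for every
`a ∈ ℝ^{n+1}` and every `λ ∈ ℂ`, `A_n(λa,1) = 0` implies `λ ∈ ℝ`. -/
theorem stmt15 (n : ℕ) (hn : 1 ≤ n) :
    ∀ a : Fin (n + 1) → ℝ, ∀ z : ℂ,
      MvPolynomial.eval (fun i => z * (a i : ℂ))
        (MvPolynomial.map (algebraMap ℝ ℂ) (mvEulerianDesc n)) = 0 → z.im = 0 := by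
  intro a z h0
  by_contra him
  set a' : ℕ → ℝ := fun v => if h : v < n + 1 then a ⟨v, h⟩ else 0 with ha'
  have ha'eq : ∀ i : Fin (n + 1), ((a' i.val : ℝ) : ℂ) = (a i : ℂ) := by
    intro i
    have h1 : a' i.val = a i := by simp only [ha', dif_pos i.isLt]
    rw [h1]
  have hmain : ∀ w : ℂ, 0 < w.im →
      (∑ σ : Equiv.Perm (Fin (n + 1)), ∏ i ∈ descentTops n σ, (w * (a i : ℂ))) ≠ 0 := by
    intro w hw
    have hkey : (Pc n (fun v => w * ((a' v : ℝ) : ℂ))).eval 1 ≠ 0 := by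
      intro hzero
      exact ((good_Pc w hw n a').2 1 hzero).2 rfl
    rw [eval_Pc_one] at hkey
    have hcv : (∑ σ : Equiv.Perm (Fin (n + 1)), ∏ i ∈ descentTops n σ, (w * (a i : ℂ))) =
        ∑ σ : Equiv.Perm (Fin (n + 1)), ∏ i ∈ descentTops n σ, (w * ((a' i.val : ℝ) : ℂ)) :=
      Finset.sum_congr rfl fun σ _ => Finset.prod_congr rfl fun i _ => by rw [ha'eq i]
    rw [hcv]
    exact hkey
  have hsum : MvPolynomial.eval (fun i => z * (a i : ℂ))
      (MvPolynomial.map (algebraMap ℝ ℂ) (mvEulerianDesc n)) =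
      ∑ σ : Equiv.Perm (Fin (n + 1)), ∏ i ∈ descentTops n σ, (z * (a i : ℂ)) := by
    simp only [mvEulerianDesc, map_sum, map_prod, MvPolynomial.map_X, MvPolynomial.eval_X]
  rw [hsum] at h0
  rcases lt_or_gt_of_ne him with hneg | hpos
  · have hconj := congrArg (starRingEnd ℂ) h0
    simp only [map_sum, map_prod, map_mul, map_zero, Complex.conj_ofReal] at hconj
    exact hmain ((starRingEnd ℂ) z)
      (by simpa [Complex.conj_im] using neg_pos.mpr hneg) hconj
  · exact hmain z hpos h0
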